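/- In the k-th iteration of the generalized Remez algorithm the following identity holds: alpha_0 * r_k - b_{k+1} + (1 - alpha_0) * b_k = 0, where b_k = |p_k(t_i) - f(t_i)| is the common leveled deviation at the current nodes, r_k = ||p_k - f||, b_{k+1} is the leveled deviation at the updated nodes, and alpha_0 is the barycentric coefficient of the new vector a_0 in the representation of the origin as a convex combination of the updated oriented moment vectors. Consequently, B_{k+1} - b_{k+1} <= (1 - alpha_0)(B_k - b_k), where B_{k+1} = min{B_k, r_k}. -/
import Mathlib


theorem remez_iteration_identity
    (n : ℕ) (a : Fin (n + 1) → (Fin n → ℝ)) (α : Fin (n + 1) → ℝ)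
    (hαpos : ∀ i, 0 < α i) (hαsum : ∑ i, α i = 1)
    (hzero : ∑ i, α i • a i = (0 : Fin n → ℝ))
    (pk pk1 : Fin n → ℝ) (c : Fin (n + 1) → ℝ)
    (bk rk bk1 : ℝ)
    (hk : ∀ i : Fin (n + 1), i ≠ 0 → ∑ j, pk j * a i j = c i + bk)
    (hk0 : ∑ j, pk j * a 0 j = c 0 + rk)
    (hk1 : ∀ i : Fin (n + 1), ∑ j, pk1 j * a i j = c i + bk1) :
    α 0 * rk - bk1 + (1 - α 0) * bk = 0 ∧
      ∀ Bk Bk1 : ℝ, bk ≤ Bk → Bk1 = min Bk rk →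
        Bk1 - bk1 ≤ (1 - α 0) * (Bk - bk) := by
  have hz : ∀ j, ∑ i, α i * a i j = 0 := by
    intro j
    have := congrFun hzero j
    simpa [Finset.sum_apply] using this
  have hL : ∀ p : Fin n → ℝ, ∑ i, α i * ∑ j, p j * a i j = 0 := by
    intro p
    have : ∑ i, α i * ∑ j, p j * a i j = ∑ j, p j * ∑ i, α i * a i j := by
      simp_rw [Finset.mul_sum]
      rw [Finset.sum_comm]
      congr 1; ext j; congr 1; ext i; ring
    rw [this]
    simp [hz]
  have hrest : ∑ i : Fin n, α i.succ = 1 - α 0 := by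
    rw [Fin.sum_univ_succ] at hαsum; linarith
  have h1 : ∑ i, α i * (c i + bk1) = 0 := by
    have := hL pk1
    simp_rw [hk1] at this
    exact this
  have h2 : α 0 * (c 0 + rk) + ∑ i : Fin n, α i.succ * (c i.succ + bk) = 0 := by
    have := hL pk
    rw [Fin.sum_univ_succ, hk0] at this
    have hsucc : ∀ i : Fin n, α i.succ * (∑ j, pk j * a i.succ j)
        = α i.succ * (c i.succ + bk) := by
      intro i; rw [hk i.succ (Fin.succ_ne_zero i)]
    rw [Finset.sum_congr rfl (fun i _ => hsucc i)] at this
    exact this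
  set C := ∑ i, α i * c i with hC
  have e1 : C + bk1 = 0 := by
    have : ∑ i, α i * (c i + bk1) = C + (∑ i, α i) * bk1 := by
      rw [hC, Finset.sum_mul, ← Finset.sum_add_distrib]
      congr 1; ext i; ring
    rw [this, hαsum] at h1; linarith
  have e2 : C + α 0 * rk + (1 - α 0) * bk = 0 := by
    have hCsplit : C = α 0 * c 0 + ∑ i : Fin n, α i.succ * c i.succ := by
      rw [hC, Fin.sum_univ_succ]
    have : ∑ i : Fin n, α i.succ * (c i.succ + bk)
        = (∑ i : Fin n, α i.succ * c i.succ) + (∑ i : Fin n, α i.succ) * bk := by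
      rw [Finset.sum_mul, ← Finset.sum_add_distrib]
      congr 1; ext i; ring
    rw [this, hrest] at h2
    rw [hCsplit]; linarith
  have hident : α 0 * rk - bk1 + (1 - α 0) * bk = 0 := by linarith
  refine ⟨hident, fun Bk Bk1 hbk hmin => ?_⟩
  have h0 : 0 < α 0 := hαpos 0
  have h1' : α 0 ≤ 1 := by
    have : 0 ≤ ∑ i : Fin n, α i.succ :=
      Finset.sum_nonneg fun i _ => (hαpos i.succ).le
    linarith
  have hle1 : Bk1 ≤ Bk := hmin ▸ min_le_left _ _
  have hle2 : Bk1 ≤ rk := hmin ▸ min_le_right _ _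
  nlinarith [mul_le_mul_of_nonneg_left hle2 h0.le,
    mul_le_mul_of_nonneg_left hle1 (by linarith : (0:ℝ) ≤ 1 - α 0)]
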